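/- Let ν > 0, ν₃ > 0 and λ₅, λ₆, λ₇ ∈ ℝ, and suppose D := (νν₃ − λ₆ + 1)² + 4ν(ν₃λ₆ − ν₃ + λ₅λ₇) < 0. Let z₁ ∈ ℂ be the square root with positive real part of (νν₃ − λ₆ + 1 − i√(−D))/(2ν), and z₂ the square root with positive real part of (νν₃ − λ₆ + 1 + i√(−D))/(2ν) (so z₂ is the complex conjugate of z₁). Set a := min(Re z₁, Re z₂) > 0 and, for d₁, d₂ ∈ ℝ, C₀ := ( |d₁|·|z₁| + |d₂|/|z₁| + |d₁|·|z₂| + |d₂|/|z₂| ) / |2ν(z₁² − z₂²)|. Then for all x ∈ ℝ, | ∫_ℝ (d₁(2πξ)² + d₂)/det l(ξ) · e^{2πiξx} dξ | ≤ C₀ · e^{−a|x|}. -/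

import Mathlib

open Real Complex
open MeasureTheory Set Filter FourierTransform

theorem integral_cexp_neg_Ioi (c : ℂ) (hc : 0 < c.re) : ∫ x : ℝ in Ioi (0:ℝ), Complex.exp (-(c * x)) = 1 / c := by
  have hcne : c ≠ 0 := fun h => by simp [h] at hc
  have hnorm : ∀ x : ℝ, ‖Complex.exp (-(c * x))‖ = Real.exp (-(c.re * x)) := by
    intro x
    rw [Complex.norm_exp]
    congr 1
    simp [Complex.mul_re]
  have hint : IntegrableOn (fun x : ℝ => Complex.exp (-(c * x))) (Ioi 0) := by
    refine Integrable.mono' ((exp_neg_integrableOn_Ioi 0 hc)) ?_ ?_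
    · exact (Complex.continuous_exp.comp (by continuity)).aestronglyMeasurable
    · filter_upwards with x
      rw [hnorm]
      simp [neg_mul]
  have hderiv : ∀ x ∈ Ici (0:ℝ), HasDerivAt (fun x : ℝ => -Complex.exp (-(c * x)) / c)
      (Complex.exp (-(c * x))) x := by
    intro x _
    have h1 : HasDerivAt (fun x : ℝ => -(c * x)) (-c) x := by
      have h := (((hasDerivAt_id x).ofReal_comp).const_mul c).neg
      simp only [Complex.ofReal_one, mul_one] at h
      exact h
    have h2 := (Complex.hasDerivAt_exp (-(c * x))).comp x h1
    have h3 := (h2.neg).div_const c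
    exact h3.congr_deriv (by rw [div_eq_iff hcne]; ring)
  have htend : Tendsto (fun x : ℝ => -Complex.exp (-(c * x)) / c) atTop (nhds 0) := by
    rw [show (0:ℂ) = -0/c by simp]
    refine Tendsto.div_const (Tendsto.neg ?_) c
    rw [tendsto_zero_iff_norm_tendsto_zero]
    simp_rw [hnorm]
    have : Tendsto (fun x : ℝ => -(c.re * x)) atTop atBot :=
      tendsto_neg_atBot_iff.mpr (tendsto_id.const_mul_atTop hc)
    exact Real.tendsto_exp_atBot.comp this
  have := integral_Ioi_of_hasDerivAt_of_tendsto' hderiv hint htend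
  rw [this]
  rw [Complex.ofReal_zero, mul_zero, neg_zero, Complex.exp_zero]
  field_simp
  ring

theorem denom_lower (z : ℂ) (hz : 0 < z.re) : ∃ c : ℝ, 0 < c ∧ ∀ ξ : ℝ,
    c * (1 + ξ ^ 2) ≤ ‖((2 * π * ξ : ℝ) : ℂ) ^ 2 + z ^ 2‖ := by
  have hzne : z ≠ 0 := fun h => by rw [h] at hz; simp at hz
  set r := z.re with hr
  set R := ‖z‖ with hRdef
  have hR : 0 < R := norm_pos_iff.mpr hzne
  refine ⟨min (r ^ 2 / (1 + (2 + 2 * R) ^ 2)) (1 / 4), ?_, ?_⟩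
  · exact lt_min (div_pos (pow_pos hz 2) (by positivity)) (by norm_num)
  intro ξ
  set t : ℝ := 2 * π * ξ with ht
  have habs : |t| = 2 * π * |ξ| := by
    rw [ht, abs_mul, abs_of_pos (by positivity : (0:ℝ) < 2 * π)]
  have hfac : ((t : ℝ) : ℂ) ^ 2 + z ^ 2 = (z + t * Complex.I) * (z - t * Complex.I) := by
    linear_combination (t:ℂ)^2 * Complex.I_sq
  have htI : ‖(t:ℂ) * Complex.I‖ = |t| := by
    rw [norm_mul, Complex.norm_I, mul_one, Complex.norm_real, Real.norm_eq_abs]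
  have h1 : r ≤ ‖z + t * Complex.I‖ := by
    have hre1 : (z + (t:ℂ) * Complex.I).re = r := by simp [hr]
    calc r = (z + (t:ℂ) * Complex.I).re := hre1.symm
    _ ≤ |(z + (t:ℂ) * Complex.I).re| := le_abs_self _
    _ ≤ ‖z + (t:ℂ) * Complex.I‖ := Complex.abs_re_le_norm _
  have h2 : r ≤ ‖z - t * Complex.I‖ := by
    have hre2 : (z - (t:ℂ) * Complex.I).re = r := by simp [hr]
    calc r = (z - (t:ℂ) * Complex.I).re := hre2.symm
    _ ≤ |(z - (t:ℂ) * Complex.I).re| := le_abs_self _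
    _ ≤ ‖z - (t:ℂ) * Complex.I‖ := Complex.abs_re_le_norm _
  have h3 : |t| - R ≤ ‖z + t * Complex.I‖ := by
    have h := norm_sub_le (z + (t:ℂ) * Complex.I) z
    rw [add_sub_cancel_left, htI] at h
    linarith
  have h4 : |t| - R ≤ ‖z - t * Complex.I‖ := by
    have h := norm_sub_le z (z - (t:ℂ) * Complex.I)
    rw [sub_sub_cancel, htI] at h
    linarith
  rw [hfac, norm_mul]
  rcases le_or_gt (|t|) (2 + 2 * R) with hcase | hcase
  · have hξt : |ξ| ≤ |t| := by
      have hπ : (1:ℝ) ≤ π := by linarith [Real.pi_gt_three]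
      nlinarith [abs_nonneg ξ]
    have hb : 1 + ξ ^ 2 ≤ 1 + (2 + 2 * R) ^ 2 := by
      nlinarith [abs_nonneg ξ, _root_.sq_abs ξ, _root_.sq_abs t, abs_nonneg t]
    calc min (r ^ 2 / (1 + (2 + 2 * R) ^ 2)) (1/4) * (1 + ξ ^ 2)
        ≤ (r ^ 2 / (1 + (2 + 2 * R) ^ 2)) * (1 + (2 + 2 * R) ^ 2) := by
          apply mul_le_mul (min_le_left _ _) hb (by positivity)
          positivity
      _ = r ^ 2 := by field_simp
      _ ≤ ‖z + (t:ℂ) * Complex.I‖ * ‖z - (t:ℂ) * Complex.I‖ := by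
          nlinarith [norm_nonneg (z + (t:ℂ) * Complex.I)]
  · have h5 : (|t| + 1) / 2 ≤ |t| - R := by linarith
    have hb : 1 + ξ ^ 2 ≤ ((|t| + 1)/2) ^ 2 := by
      have hπ : (3:ℝ) < π := Real.pi_gt_three
      have hξt : 6 * |ξ| ≤ |t| := by nlinarith [abs_nonneg ξ]
      nlinarith [_root_.sq_abs ξ, _root_.sq_abs t, abs_nonneg t, abs_nonneg ξ]
    have h6 : (0:ℝ) ≤ (|t| + 1)/2 := by positivity
    calc min (r ^ 2 / (1 + (2 + 2 * R) ^ 2)) (1/4) * (1 + ξ ^ 2)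
        ≤ 1 * (((|t| + 1)/2) * ((|t| + 1)/2)) := by
          rw [show ((|t| + 1)/2) ^ 2 = ((|t| + 1)/2) * ((|t| + 1)/2) by ring] at hb
          apply mul_le_mul ((min_le_right _ _).trans (by norm_num)) hb (by positivity) (by norm_num)
      _ = ((|t| + 1)/2) * ((|t| + 1)/2) := one_mul _
      _ ≤ ‖z + (t:ℂ) * Complex.I‖ * ‖z - (t:ℂ) * Complex.I‖ :=
          mul_le_mul (h5.trans h3) (h5.trans h4) h6 (norm_nonneg _)

theorem integrableOn_cexp_neg_Ioi (c : ℂ) (hc : 0 < c.re) :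
    IntegrableOn (fun x : ℝ => Complex.exp (-(c * x))) (Ioi 0) := by
  refine Integrable.mono' ((exp_neg_integrableOn_Ioi 0 hc)) ?_ ?_
  · exact (Complex.continuous_exp.comp (by continuity)).aestronglyMeasurable
  · filter_upwards with x
    rw [Complex.norm_exp]
    simp [Complex.mul_re, neg_mul]

theorem integrable_rexp_neg_abs (r : ℝ) (hr : 0 < r) :
    Integrable fun x : ℝ => Real.exp (-(r * |x|)) := by
  have hcont : Continuous fun x : ℝ => Real.exp (-(r * |x|)) := by continuity
  refine hcont.locallyIntegrable.integrable_of_isBigO_atTop_of_norm_isNegInvariant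
    (g := fun x => Real.exp (-(r * x))) ?_ ?_ ?_
  · exact ae_of_all _ fun x => by simp [abs_neg]
  · refine (Filter.EventuallyEq.symm ?_).isBigO
    filter_upwards [eventually_ge_atTop (0:ℝ)] with x hx
    rw [_root_.abs_of_nonneg hx]
  · exact ⟨Ioi 0, Ioi_mem_atTop 0, by simpa [neg_mul] using exp_neg_integrableOn_Ioi 0 hr⟩

theorem integrable_cexp_neg_abs (z : ℂ) (hz : 0 < z.re) :
    Integrable fun x : ℝ => Complex.exp (-(z * |x|)) := by
  refine Integrable.mono' (integrable_rexp_neg_abs z.re hz) ?_ ?_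
  · exact (Complex.continuous_exp.comp (by continuity)).aestronglyMeasurable
  · filter_upwards with x
    rw [Complex.norm_exp]
    simp [Complex.mul_re]

theorem fourier_two_sided_exp (z : ℂ) (hz : 0 < z.re) (ξ : ℝ) :
    𝓕 (fun x : ℝ => Complex.exp (-(z * |x|))) ξ
      = 2 * z / (z ^ 2 + ((2 * π * ξ : ℝ) : ℂ) ^ 2) := by
  set c₁ : ℂ := z + (2 * π * ξ : ℝ) * Complex.I with hc₁
  set c₂ : ℂ := z - (2 * π * ξ : ℝ) * Complex.I with hc₂
  have hc₁re : 0 < c₁.re := by simp [hc₁, hz]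
  have hc₂re : 0 < c₂.re := by simp [hc₂, hz]
  have hc₁ne : c₁ ≠ 0 := fun h => by rw [h] at hc₁re; simp at hc₁re
  have hc₂ne : c₂ ≠ 0 := fun h => by rw [h] at hc₂re; simp at hc₂re
  rw [Real.fourier_real_eq_integral_exp_smul]
  set F : ℝ → ℂ := fun v => Complex.exp (↑(-2 * π * v * ξ) * Complex.I)
    • Complex.exp (-(z * |v|)) with hF
  have hFIoi : ∀ v ∈ Ioi (0:ℝ), F v = Complex.exp (-(c₁ * v)) := by
    intro v hv
    rw [hF]
    simp only [smul_eq_mul, ← Complex.exp_add, abs_of_pos (mem_Ioi.mp hv)]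
    congr 1
    push_cast [hc₁]
    ring
  have hFIic : ∀ v ∈ Iic (0:ℝ), F v = Complex.exp (-(c₂ * (-v))) := by
    intro v hv
    rw [hF]
    simp only [smul_eq_mul, ← Complex.exp_add, abs_of_nonpos (mem_Iic.mp hv)]
    congr 1
    push_cast [hc₂]
    ring
  have hI1 : IntegrableOn F (Ioi 0) := by
    refine ((integrableOn_cexp_neg_Ioi c₁ hc₁re).congr_fun (fun v hv => (hFIoi v hv).symm)
      measurableSet_Ioi)
  have h_map_neg : (volume.restrict (Ici (0:ℝ))).map Neg.neg = volume.restrict (Iic 0) := by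
    conv => rhs; rw [← Measure.map_neg_eq_self (volume : Measure ℝ),
      measurableEmbedding_neg.restrict_map]
    simp
  have hI2 : IntegrableOn F (Iic 0) := by
    rw [IntegrableOn, ← h_map_neg, measurableEmbedding_neg.integrable_map_iff]
    have hbase : IntegrableOn (fun v : ℝ => Complex.exp (-(c₂ * v))) (Ici 0) :=
      Iff.mpr integrableOn_Ici_iff_integrableOn_Ioi (integrableOn_cexp_neg_Ioi c₂ hc₂re)
    refine hbase.congr_fun (fun v hv => ?_) measurableSet_Ici
    have := hFIic (-v) (by simpa using mem_Ici.mp hv)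
    simpa using this.symm
  have hsplit := intervalIntegral.integral_Iic_add_Ioi hI2 hI1 (μ := volume) (b := (0:ℝ))
  have hIoi : ∫ v in Ioi (0:ℝ), F v = 1 / c₁ := by
    rw [setIntegral_congr_fun measurableSet_Ioi hFIoi]
    exact integral_cexp_neg_Ioi c₁ hc₁re
  have hIic : ∫ v in Iic (0:ℝ), F v = 1 / c₂ := by
    have h1 : ∫ v in Iic (0:ℝ), F v = ∫ v in Ioi (0:ℝ), F (-v) := by
      have := integral_comp_neg_Iic (0:ℝ) (fun x => F (-x))
      simpa using this
    rw [h1]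
    rw [setIntegral_congr_fun measurableSet_Ioi
      (fun v hv => by simpa using hFIic (-v) (by simpa using (mem_Ioi.mp hv).le))]
    exact integral_cexp_neg_Ioi c₂ hc₂re
  have hval : ∫ v : ℝ, F v = 1 / c₂ + 1 / c₁ := by rw [← hsplit, hIic, hIoi]
  rw [hval]
  have hprod : c₂ * c₁ = z ^ 2 + ((2 * π * ξ : ℝ) : ℂ) ^ 2 := by
    rw [hc₁, hc₂]
    linear_combination (-(((2 * π * ξ : ℝ) : ℂ)) ^ 2) * Complex.I_sq
  rw [div_add_div _ _ hc₂ne hc₁ne, hprod]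
  congr 1
  rw [hc₁, hc₂]; ring

theorem denom_ne_zero (z : ℂ) (hz : 0 < z.re) (ξ : ℝ) :
    ((2 * π * ξ : ℝ) : ℂ) ^ 2 + z ^ 2 ≠ 0 := by
  obtain ⟨c, hc, hb⟩ := denom_lower z hz
  intro h
  have := hb ξ
  rw [h, norm_zero] at this
  nlinarith [sq_nonneg ξ]

theorem integrable_aux (z : ℂ) (hz : 0 < z.re) (φ : ℝ → ℂ) (hφc : Continuous φ)
    (hφ : ∀ ξ, ‖φ ξ‖ ≤ 1) :
    Integrable fun ξ : ℝ => φ ξ / (((2 * π * ξ : ℝ) : ℂ) ^ 2 + z ^ 2) := by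
  obtain ⟨c, hc, hb⟩ := denom_lower z hz
  have hne := denom_ne_zero z hz
  have hcontd : Continuous fun ξ : ℝ => ((2 * π * ξ : ℝ) : ℂ) ^ 2 + z ^ 2 := by continuity
  refine Integrable.mono' ((integrable_inv_one_add_sq).const_mul c⁻¹) ?_ ?_
  · exact (hφc.div hcontd hne).aestronglyMeasurable
  · filter_upwards with ξ
    rw [norm_div]
    have h1 : 0 < 1 + ξ ^ 2 := by positivity
    calc ‖φ ξ‖ / ‖((2 * π * ξ : ℝ) : ℂ) ^ 2 + z ^ 2‖
        ≤ 1 / (c * (1 + ξ ^ 2)) :=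
          div_le_div₀ (by norm_num) (hφ ξ) (by positivity) (hb ξ)
      _ = c⁻¹ * (1 + ξ ^ 2)⁻¹ := by field_simp
  
theorem key_integral (z : ℂ) (hz : 0 < z.re) (x : ℝ) :
    ∫ ξ : ℝ, Complex.exp (2 * ↑π * Complex.I * ↑ξ * ↑x) / (((2 * π * ξ : ℝ) : ℂ) ^ 2 + z ^ 2)
      = Complex.exp (-(z * |x|)) / (2 * z) := by
  have hzne : z ≠ 0 := fun h => by rw [h] at hz; simp at hz
  set f : ℝ → ℂ := fun x => Complex.exp (-(z * |x|)) with hfdef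
  have hf : Integrable f := integrable_cexp_neg_abs z hz
  have hFf : 𝓕 f = fun ξ : ℝ => 2 * z / (z ^ 2 + ((2 * π * ξ : ℝ) : ℂ) ^ 2) :=
    funext (fourier_two_sided_exp z hz)
  have hFint : Integrable (𝓕 f) := by
    rw [hFf]
    have := (integrable_aux z hz (fun _ => 1) continuous_const (fun ξ => by norm_num)).const_mul
      (2 * z)
    refine this.congr ?_
    filter_upwards with ξ
    rw [mul_one_div, add_comm ((((2 * π * ξ : ℝ) : ℂ)) ^ 2)]
  have hcont : Continuous f := by
    apply Complex.continuous_exp.comp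
    exact (continuous_const.mul (Complex.continuous_ofReal.comp _root_.continuous_abs)).neg
  have hinv := hf.fourierInv_fourier_eq hFint (hcont.continuousAt (x := x))
  rw [Real.fourierInv_eq'] at hinv
  have hint : ∀ ξ : ℝ, Complex.exp (↑(2 * π * ((inner ℝ ξ x : ℝ))) * Complex.I) • (𝓕 f ξ)
      = (2 * z) * (Complex.exp (2 * ↑π * Complex.I * ↑ξ * ↑x)
        / (((2 * π * ξ : ℝ) : ℂ) ^ 2 + z ^ 2)) := by
    intro ξ
    rw [hFf]
    have hexp : ((2 * π * ((inner ℝ ξ x : ℝ)) : ℝ) : ℂ) * Complex.I = 2 * ↑π * Complex.I * ↑ξ * ↑x := by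
      have : (inner ℝ ξ x : ℝ) = ξ * x := by simp [RCLike.inner_apply]; ring
      rw [this]
      push_cast
      ring
    rw [hexp, smul_eq_mul]
    simp only []
    rw [add_comm (z ^ 2)]
    ring
  simp_rw [hint] at hinv
  rw [integral_const_mul] at hinv
  rw [eq_div_iff (by simp [hzne] : (2 : ℂ) * z ≠ 0), mul_comm]
  exact hinv

theorem denom_ne_zero' (w : ℂ) (hw : w.im ≠ 0) (ξ : ℝ) :
    ((2 * π * ξ : ℝ) : ℂ) ^ 2 + w ≠ 0 := by
  intro h
  have h2 : ((((2 * π * ξ : ℝ) : ℂ)) ^ 2).im = 0 := by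
    rw [← Complex.ofReal_pow]; exact Complex.ofReal_im _
  have : (((2 * π * ξ : ℝ) : ℂ) ^ 2 + w).im = w.im := by
    rw [Complex.add_im, h2, zero_add]
  rw [h] at this
  exact hw this.symm

theorem term_bound (ν' Δ : ℂ) (hν' : ν' ≠ 0) (hΔ : Δ ≠ 0) (z : ℂ) (hz : 0 < z.re)
    (d₁ d₂ a x : ℝ) (ha : a ≤ z.re) :
    ‖((d₂ : ℂ) - (d₁ : ℂ) * z ^ 2) / (ν' * Δ) * (Complex.exp (-(z * |x|)) / (2 * z))‖
      ≤ (|d₁| * ‖z‖ + |d₂| / ‖z‖) / ‖2 * ν' * Δ‖ * Real.exp (-a * |x|) := by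
  have hzne : z ≠ 0 := fun h => by rw [h] at hz; simp at hz
  have hnz : 0 < ‖z‖ := norm_pos_iff.mpr hzne
  have hpν : 0 < ‖ν'‖ := norm_pos_iff.mpr hν'
  have hpΔ : 0 < ‖Δ‖ := norm_pos_iff.mpr hΔ
  have h1 : ‖ν' * Δ‖ = ‖ν'‖ * ‖Δ‖ := norm_mul _ _
  have h2 : ‖(2:ℂ) * z‖ = 2 * ‖z‖ := by
    rw [norm_mul, show (2:ℂ) = ((2:ℝ):ℂ) by norm_num, Complex.norm_real, Real.norm_eq_abs]
    norm_num
  have h2' : ‖(2:ℂ)‖ = 2 := by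
    rw [show (2:ℂ) = ((2:ℝ):ℂ) by norm_num, Complex.norm_real, Real.norm_eq_abs]
    norm_num
  have h3 : ‖2 * ν' * Δ‖ = 2 * (‖ν'‖ * ‖Δ‖) := by
    rw [norm_mul, norm_mul, h2']
    ring
  have h4 : ‖Complex.exp (-(z * |x|))‖ = Real.exp (-(z.re * |x|)) := by
    rw [Complex.norm_exp]
    simp [Complex.mul_re]
  have hE : Real.exp (-(z.re * |x|)) ≤ Real.exp (-a * |x|) := by
    apply Real.exp_le_exp.mpr
    have := mul_le_mul_of_nonneg_right ha (abs_nonneg x)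
    linarith
  have hnum : ‖(d₂ : ℂ) - (d₁ : ℂ) * z ^ 2‖ ≤ |d₂| + |d₁| * ‖z‖ ^ 2 := by
    refine (norm_sub_le _ _).trans ?_
    rw [norm_mul, norm_pow, Complex.norm_real, Complex.norm_real, Real.norm_eq_abs,
      Real.norm_eq_abs]
  have hcoef : (|d₁| * ‖z‖ + |d₂| / ‖z‖) / ‖2 * ν' * Δ‖
      = (|d₂| + |d₁| * ‖z‖ ^ 2) / (2 * (‖ν'‖ * ‖Δ‖) * ‖z‖) := by
    have habsz : ‖z‖ ≠ 0 := hnz.ne'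
    rw [h3]
    field_simp
    ring
  rw [norm_mul, norm_div, norm_div, h1, h2, h4, hcoef, div_mul_div_comm,
    div_mul_eq_mul_div, show ‖ν'‖ * ‖Δ‖ * (2 * ‖z‖) = 2 * (‖ν'‖ * ‖Δ‖) * ‖z‖ by ring]
  gcongr

/-- Exponential decay of the inverse Fourier transform of
`ξ ↦ (d₁(2πξ)² + d₂)/det l(ξ)` in the complex-root case `D < 0`, where `det l(ξ)` is the
determinant of the Thomas symbol and `z₁, z₂` are the square roots with positive real part
of `(νν₃ − λ₆ + 1 ∓ i√(−D))/(2ν)`. -/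
theorem inverse_fourier_decay_complex_roots
    (ν ν₃ lam₅ lam₆ lam₇ : ℝ) (hν : 0 < ν) (hν₃ : 0 < ν₃)
    (D : ℝ) (hD : D = (ν * ν₃ - lam₆ + 1) ^ 2 + 4 * ν * (ν₃ * lam₆ - ν₃ + lam₅ * lam₇))
    (hDneg : D < 0)
    (z₁ z₂ : ℂ)
    (hz₁ : z₁ ^ 2 = (((ν * ν₃ - lam₆ + 1 : ℝ) : ℂ) - (Real.sqrt (-D) : ℂ) * Complex.I) /
      ((2 * ν : ℝ) : ℂ))
    (hz₁re : 0 < z₁.re)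
    (hz₂ : z₂ ^ 2 = (((ν * ν₃ - lam₆ + 1 : ℝ) : ℂ) + (Real.sqrt (-D) : ℂ) * Complex.I) /
      ((2 * ν : ℝ) : ℂ))
    (hz₂re : 0 < z₂.re)
    (a : ℝ) (ha : a = min z₁.re z₂.re)
    (d₁ d₂ : ℝ) (C₀ : ℝ)
    (hC₀ : C₀ = (|d₁| * ‖z₁‖ + |d₂| / ‖z₁‖ + |d₁| * ‖z₂‖ + |d₂| / ‖z₂‖) /
      ‖2 * (ν : ℂ) * (z₁ ^ 2 - z₂ ^ 2)‖) :
    ∀ x : ℝ,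
      ‖∫ ξ : ℝ, (((d₁ * (2 * π * ξ) ^ 2 + d₂) /
          ((-ν * (2 * π * ξ) ^ 2 + lam₆ - 1) * (-(2 * π * ξ) ^ 2 - ν₃) - lam₅ * lam₇) : ℝ) : ℂ) *
          Complex.exp (2 * (π : ℂ) * Complex.I * (ξ : ℂ) * (x : ℂ))‖
        ≤ C₀ * Real.exp (-a * |x|) := by
  intro x
  set s : ℝ := Real.sqrt (-D) with hsdef
  have hs : 0 < s := Real.sqrt_pos.mpr (by linarith)
  have hνC : (ν : ℂ) ≠ 0 := Complex.ofReal_ne_zero.mpr hν.ne'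
  have h2ν : ((2 * ν : ℝ) : ℂ) ≠ 0 := Complex.ofReal_ne_zero.mpr (by positivity)
  -- basic algebraic identities
  have e₁ : ((2 * ν : ℝ) : ℂ) * z₁ ^ 2
      = ((ν * ν₃ - lam₆ + 1 : ℝ) : ℂ) - (s : ℂ) * Complex.I := by
    rw [hz₁, mul_div_cancel₀ _ h2ν]
  have e₂ : ((2 * ν : ℝ) : ℂ) * z₂ ^ 2
      = ((ν * ν₃ - lam₆ + 1 : ℝ) : ℂ) + (s : ℂ) * Complex.I := by
    rw [hz₂, mul_div_cancel₀ _ h2ν]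
  have hs2 : ((s : ℝ) : ℂ) ^ 2 = -((D : ℝ) : ℂ) := by
    rw [← Complex.ofReal_pow, Real.sq_sqrt (by linarith : (0:ℝ) ≤ -D), Complex.ofReal_neg]
  have hDC : ((D : ℝ) : ℂ) = ((ν * ν₃ - lam₆ + 1 : ℝ) : ℂ) ^ 2
      + 4 * (ν : ℂ) * ((ν₃ : ℂ) * (lam₆ : ℂ) - (ν₃ : ℂ) + (lam₅ : ℂ) * (lam₇ : ℂ)) := by
    rw [hD]; push_cast; ring
  -- imaginary parts
  have him₁ : 2 * ν * (z₁ ^ 2).im = -s := by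
    have := congrArg Complex.im e₁
    simpa [Complex.mul_im] using this
  have him₂ : 2 * ν * (z₂ ^ 2).im = s := by
    have := congrArg Complex.im e₂
    simpa [Complex.mul_im] using this
  have him₁ne : (z₁ ^ 2).im ≠ 0 := by
    intro h; rw [h] at him₁; simp at him₁; linarith
  have him₂ne : (z₂ ^ 2).im ≠ 0 := by
    intro h; rw [h] at him₂; simp at him₂; linarith
  have hww : z₁ ^ 2 ≠ z₂ ^ 2 := by
    intro h
    rw [h] at him₁
    have : s = -s := by linarith [him₁, him₂]
    linarith
  have hwwne : z₁ ^ 2 - z₂ ^ 2 ≠ 0 := sub_ne_zero.mpr hww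
  have hwwne' : z₂ ^ 2 - z₁ ^ 2 ≠ 0 := sub_ne_zero.mpr (Ne.symm hww)
  -- determinant factorization
  have hdetl : ∀ ξ : ℝ,
      (((-ν * (2 * π * ξ) ^ 2 + lam₆ - 1) * (-(2 * π * ξ) ^ 2 - ν₃) - lam₅ * lam₇ : ℝ) : ℂ)
      = (ν : ℂ) * ((((2 * π * ξ : ℝ)) : ℂ) ^ 2 + z₁ ^ 2)
          * ((((2 * π * ξ : ℝ)) : ℂ) ^ 2 + z₂ ^ 2) := by
    intro ξ
    have eS : ((2 * ν : ℝ) : ℂ) * (z₁ ^ 2 + z₂ ^ 2)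
        = 2 * ((ν * ν₃ - lam₆ + 1 : ℝ) : ℂ) := by
      linear_combination e₁ + e₂
    have eP : ((2 * ν : ℝ) : ℂ) ^ 2 * (z₁ ^ 2 * z₂ ^ 2)
        = -(4 * (ν : ℂ) * ((ν₃ : ℂ) * (lam₆ : ℂ) - (ν₃ : ℂ) + (lam₅ : ℂ) * (lam₇ : ℂ))) := by
      have e₁₂ : (((2 * ν : ℝ) : ℂ) * z₁ ^ 2) * (((2 * ν : ℝ) : ℂ) * z₂ ^ 2)
          = (((ν * ν₃ - lam₆ + 1 : ℝ) : ℂ) - (s : ℂ) * Complex.I)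
            * (((ν * ν₃ - lam₆ + 1 : ℝ) : ℂ) + (s : ℂ) * Complex.I) := by rw [e₁, e₂]
      linear_combination e₁₂ + hs2 - hDC - (((s : ℝ) : ℂ) ^ 2) * Complex.I_sq
    have h4ν : (4:ℂ) * (ν:ℂ) ≠ 0 := by simp [hνC]
    apply mul_left_cancel₀ h4ν
    push_cast at eS eP ⊢
    linear_combination (-(2 * (ν:ℂ)) * (2 * (π:ℂ) * (ξ:ℂ)) ^ 2) * eS - eP
  -- rest of the proof
  have hden₁ : ∀ ξ : ℝ, (((2 * π * ξ : ℝ)) : ℂ) ^ 2 + z₁ ^ 2 ≠ 0 :=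
    fun ξ => denom_ne_zero' _ him₁ne ξ
  have hden₂ : ∀ ξ : ℝ, (((2 * π * ξ : ℝ)) : ℂ) ^ 2 + z₂ ^ 2 ≠ 0 :=
    fun ξ => denom_ne_zero' _ him₂ne ξ
  have hφc : Continuous fun ξ : ℝ => Complex.exp (2 * (π:ℂ) * Complex.I * (ξ:ℂ) * (x:ℂ)) :=
    Complex.continuous_exp.comp (by continuity)
  have hφ1 : ∀ ξ : ℝ, ‖Complex.exp (2 * (π:ℂ) * Complex.I * (ξ:ℂ) * (x:ℂ))‖ ≤ 1 := by
    intro ξ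
    have hre : (2 * (π:ℂ) * Complex.I * (ξ:ℂ) * (x:ℂ)) = ((2*π*ξ*x : ℝ):ℂ) * Complex.I := by
      push_cast; ring
    rw [hre, Complex.norm_exp]
    simp
  have hg₁ : Integrable fun ξ : ℝ =>
      Complex.exp (2 * (π:ℂ) * Complex.I * (ξ:ℂ) * (x:ℂ)) / ((((2*π*ξ:ℝ)):ℂ)^2 + z₁^2) :=
    integrable_aux z₁ hz₁re _ hφc hφ1
  have hg₂ : Integrable fun ξ : ℝ =>
      Complex.exp (2 * (π:ℂ) * Complex.I * (ξ:ℂ) * (x:ℂ)) / ((((2*π*ξ:ℝ)):ℂ)^2 + z₂^2) :=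
    integrable_aux z₂ hz₂re _ hφc hφ1
  have hsplit : ∀ ξ : ℝ, (((d₁ * (2 * π * ξ) ^ 2 + d₂) /
          ((-ν * (2 * π * ξ) ^ 2 + lam₆ - 1) * (-(2 * π * ξ) ^ 2 - ν₃) - lam₅ * lam₇) : ℝ) : ℂ) *
          Complex.exp (2 * (π : ℂ) * Complex.I * (ξ : ℂ) * (x : ℂ))
      = ((d₂ : ℂ) - (d₁ : ℂ) * z₁ ^ 2) / ((ν:ℂ) * (z₂ ^ 2 - z₁ ^ 2))
          * (Complex.exp (2 * (π:ℂ) * Complex.I * (ξ:ℂ) * (x:ℂ)) / ((((2*π*ξ:ℝ)):ℂ)^2 + z₁^2))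
        + ((d₂ : ℂ) - (d₁ : ℂ) * z₂ ^ 2) / ((ν:ℂ) * (z₁ ^ 2 - z₂ ^ 2))
          * (Complex.exp (2 * (π:ℂ) * Complex.I * (ξ:ℂ) * (x:ℂ)) / ((((2*π*ξ:ℝ)):ℂ)^2 + z₂^2)) := by
    intro ξ
    have h1 := hden₁ ξ
    have h2 := hden₂ ξ
    rw [Complex.ofReal_div, hdetl ξ, div_mul_eq_mul_div, div_mul_div_comm, div_mul_div_comm,
      div_add_div _ _ (mul_ne_zero (mul_ne_zero hνC hwwne') h1)
        (mul_ne_zero (mul_ne_zero hνC hwwne) h2),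
      div_eq_div_iff (mul_ne_zero (mul_ne_zero hνC h1) h2)
        (mul_ne_zero (mul_ne_zero (mul_ne_zero hνC hwwne') h1)
          (mul_ne_zero (mul_ne_zero hνC hwwne) h2))]
    push_cast
    ring
  have hval : (∫ ξ : ℝ, (((d₁ * (2 * π * ξ) ^ 2 + d₂) /
          ((-ν * (2 * π * ξ) ^ 2 + lam₆ - 1) * (-(2 * π * ξ) ^ 2 - ν₃) - lam₅ * lam₇) : ℝ) : ℂ) *
          Complex.exp (2 * (π : ℂ) * Complex.I * (ξ : ℂ) * (x : ℂ)))
      = ((d₂ : ℂ) - (d₁ : ℂ) * z₁ ^ 2) / ((ν:ℂ) * (z₂ ^ 2 - z₁ ^ 2))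
          * (Complex.exp (-(z₁ * |x|)) / (2 * z₁))
        + ((d₂ : ℂ) - (d₁ : ℂ) * z₂ ^ 2) / ((ν:ℂ) * (z₁ ^ 2 - z₂ ^ 2))
          * (Complex.exp (-(z₂ * |x|)) / (2 * z₂)) := by
    have hcongr := integral_congr_ae (μ := volume) (ae_of_all _ hsplit)
    rw [hcongr, integral_add (hg₁.const_mul _) (hg₂.const_mul _), integral_const_mul,
      integral_const_mul, key_integral z₁ hz₁re x, key_integral z₂ hz₂re x]
  rw [hval]
  have tb₁ := term_bound (ν:ℂ) (z₂ ^ 2 - z₁ ^ 2) hνC hwwne' z₁ hz₁re d₁ d₂ a x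
    (by rw [ha]; exact min_le_left _ _)
  have tb₂ := term_bound (ν:ℂ) (z₁ ^ 2 - z₂ ^ 2) hνC hwwne z₂ hz₂re d₁ d₂ a x
    (by rw [ha]; exact min_le_right _ _)
  have hsw : ‖2 * (ν:ℂ) * (z₂ ^ 2 - z₁ ^ 2)‖ = ‖2 * (ν:ℂ) * (z₁ ^ 2 - z₂ ^ 2)‖ := by
    rw [show (2 * (ν:ℂ) * (z₂ ^ 2 - z₁ ^ 2)) = -(2 * (ν:ℂ) * (z₁ ^ 2 - z₂ ^ 2)) by ring,
      norm_neg]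
  rw [hsw] at tb₁
  calc ‖_ + _‖ ≤ _ + _ := norm_add_le _ _
    _ ≤ (|d₁| * ‖z₁‖ + |d₂| / ‖z₁‖) / ‖2 * (ν:ℂ) * (z₁ ^ 2 - z₂ ^ 2)‖ * Real.exp (-a * |x|)
        + (|d₁| * ‖z₂‖ + |d₂| / ‖z₂‖) / ‖2 * (ν:ℂ) * (z₁ ^ 2 - z₂ ^ 2)‖ * Real.exp (-a * |x|) :=
        add_le_add tb₁ tb₂
    _ = C₀ * Real.exp (-a * |x|) := by rw [hC₀]; ring
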